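/- Let r ≥ 1 and let P(z, ζ) = z^r + h_1(ζ) z^{r−1} + ⋯ + h_r(ζ) be a monic polynomial in z whose coefficients h_j are analytic functions of ζ in a neighborhood of 0 with h_j(0) = 0 for j = 1, …, r and h_r'(0) ≠ 0. Then for every ε > 0 there exists δ > 0 such that for every ζ with 0 < |ζ| < δ, the polynomial P(·, ζ) has exactly r roots, these roots are pairwise distinct (hence simple), and every root z of P(·, ζ) satisfies |z^r + ζ h_r'(0)| ≤ ε |ζ|. -/

import Mathlib

open Complex

noncomputable section

open Polynomial in
private lemma root_norm_le (r : ℕ) (hr : 1 ≤ r) (a : ℕ → ℂ) (t : ℝ)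
    (ht : 0 < t) (ht1 : t ≤ 1) (hS : ∑ j ∈ Finset.Icc 1 r, ‖a j‖ ≤ t ^ r)
    (z : ℂ) (hz : z ^ r + ∑ j ∈ Finset.Icc 1 r, a j * z ^ (r - j) = 0) :
    ‖z‖ ≤ t := by
  by_contra hlt
  push_neg at hlt
  have hzr : z ^ r = -∑ j ∈ Finset.Icc 1 r, a j * z ^ (r - j) := by linear_combination hz
  have hnorm : ‖z‖ ^ r ≤ ∑ j ∈ Finset.Icc 1 r, ‖a j‖ * ‖z‖ ^ (r - j) := by
    calc ‖z‖ ^ r = ‖z ^ r‖ := (norm_pow z r).symm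
    _ = ‖∑ j ∈ Finset.Icc 1 r, a j * z ^ (r - j)‖ := by rw [hzr, norm_neg]
    _ ≤ ∑ j ∈ Finset.Icc 1 r, ‖a j * z ^ (r - j)‖ := norm_sum_le _ _
    _ = ∑ j ∈ Finset.Icc 1 r, ‖a j‖ * ‖z‖ ^ (r - j) := by simp [norm_mul, norm_pow]
  rcases le_or_gt ‖z‖ 1 with h1 | h1
  · have h2 : ‖z‖ ^ r ≤ t ^ r := by
      calc ‖z‖ ^ r ≤ ∑ j ∈ Finset.Icc 1 r, ‖a j‖ * ‖z‖ ^ (r - j) := hnorm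
      _ ≤ ∑ j ∈ Finset.Icc 1 r, ‖a j‖ * 1 := by
          apply Finset.sum_le_sum; intro j hj
          exact mul_le_mul_of_nonneg_left (pow_le_one₀ (norm_nonneg z) h1) (norm_nonneg _)
      _ = ∑ j ∈ Finset.Icc 1 r, ‖a j‖ := by simp
      _ ≤ t ^ r := hS
    have h3 : t ^ r < ‖z‖ ^ r := by
      apply pow_lt_pow_left₀ hlt ht.le (by omega)
    linarith
  · have hpow : ∀ j ∈ Finset.Icc 1 r, ‖z‖ ^ (r - j) ≤ ‖z‖ ^ (r - 1) := by
      intro j hj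
      simp only [Finset.mem_Icc] at hj
      exact pow_le_pow_right₀ h1.le (by omega)
    have h2 : ‖z‖ ^ r ≤ t ^ r * ‖z‖ ^ (r - 1) := by
      calc ‖z‖ ^ r ≤ ∑ j ∈ Finset.Icc 1 r, ‖a j‖ * ‖z‖ ^ (r - j) := hnorm
      _ ≤ ∑ j ∈ Finset.Icc 1 r, ‖a j‖ * ‖z‖ ^ (r - 1) := by
          apply Finset.sum_le_sum; intro j hj
          exact mul_le_mul_of_nonneg_left (hpow j hj) (norm_nonneg _)
      _ = (∑ j ∈ Finset.Icc 1 r, ‖a j‖) * ‖z‖ ^ (r - 1) := (Finset.sum_mul _ _ _).symm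
      _ ≤ t ^ r * ‖z‖ ^ (r - 1) := by
          exact mul_le_mul_of_nonneg_right hS (pow_nonneg (norm_nonneg z) _)
    have hzp : (0:ℝ) < ‖z‖ ^ (r - 1) := pow_pos (by linarith) _
    have h3 : ‖z‖ ≤ t ^ r := by
      have e : ‖z‖ * ‖z‖ ^ (r - 1) = ‖z‖ ^ r := by
        rw [← pow_succ']; congr 1; omega
      have : ‖z‖ * ‖z‖ ^ (r - 1) ≤ t ^ r * ‖z‖ ^ (r - 1) := by rw [e]; exact h2
      exact le_of_mul_le_mul_right this hzp
    have h4 : t ^ r ≤ t := pow_le_of_le_one ht.le ht1 (by omega)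
    linarith

private lemma deriv_identity (r : ℕ) (hr : 1 ≤ r) (a : ℕ → ℂ) (z : ℂ)
    (h1 : z ^ r + ∑ j ∈ Finset.Icc 1 r, a j * z ^ (r - j) = 0)
    (h2 : (r:ℂ) * z ^ (r-1) + ∑ j ∈ Finset.Icc 1 r, a j * ((r-j:ℕ):ℂ) * z ^ ((r-j) - 1) = 0) :
    ∑ j ∈ Finset.Icc 1 r, (j:ℂ) * (a j * z ^ (r - j)) = 0 := by
  have ezz : z * z ^ (r - 1) = z ^ r := by rw [← pow_succ']; congr 1; omega
  have key : ∀ j ∈ Finset.Icc 1 r, (j:ℂ) * (a j * z ^ (r - j))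
      = (r:ℂ) * (a j * z ^ (r - j)) - z * (a j * ((r-j:ℕ):ℂ) * z ^ ((r-j) - 1)) := by
    intro j hj
    simp only [Finset.mem_Icc] at hj
    rcases Nat.eq_or_lt_of_le hj.2 with heq | hlt
    · subst heq
      simp [Nat.sub_self]
    · have e1 : ((r - j : ℕ) : ℂ) = (r:ℂ) - j := by
        push_cast [Nat.cast_sub hj.2]; ring
      have e2 : z * z ^ ((r - j) - 1) = z ^ (r - j) := by
        rw [← pow_succ']; congr 1; omega
      rw [e1]
      have e3 : z * (a j * ((r:ℂ) - j) * z ^ ((r-j) - 1)) = ((r:ℂ) - j) * (a j * z ^ (r - j)) := by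
        rw [← e2]; ring
      rw [e3]; ring
  rw [Finset.sum_congr rfl key, Finset.sum_sub_distrib, ← Finset.mul_sum, ← Finset.mul_sum]
  have s1 : ∑ j ∈ Finset.Icc 1 r, a j * z ^ (r - j) = -(z ^ r) := by linear_combination h1
  have s2 : ∑ j ∈ Finset.Icc 1 r, a j * ((r-j:ℕ):ℂ) * z ^ ((r-j) - 1) = -((r:ℂ) * z ^ (r-1)) := by
    linear_combination h2
  rw [s1, s2]
  linear_combination ((r:ℂ)) * ezz

open Polynomial in
private lemma poly_basic (r : ℕ) (a : ℕ → ℂ) :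
    (X ^ r + ∑ j ∈ Finset.Icc 1 r, C (a j) * X ^ (r - j) : ℂ[X]).Monic ∧
    (X ^ r + ∑ j ∈ Finset.Icc 1 r, C (a j) * X ^ (r - j) : ℂ[X]).natDegree = r ∧
    (∀ z : ℂ, (X ^ r + ∑ j ∈ Finset.Icc 1 r, C (a j) * X ^ (r - j) : ℂ[X]).eval z
        = z ^ r + ∑ j ∈ Finset.Icc 1 r, a j * z ^ (r - j)) ∧
    (∀ z : ℂ, (derivative (X ^ r + ∑ j ∈ Finset.Icc 1 r, C (a j) * X ^ (r - j) : ℂ[X])).eval z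
        = (r:ℂ) * z ^ (r - 1) + ∑ j ∈ Finset.Icc 1 r, a j * ((r - j : ℕ) : ℂ) * z ^ ((r - j) - 1)) := by
  have hdegsum : (∑ j ∈ Finset.Icc 1 r, C (a j) * X ^ (r - j) : ℂ[X]).degree < (r : ℕ) := by
    apply lt_of_le_of_lt (Polynomial.degree_sum_le _ _)
    rw [Finset.sup_lt_iff (by exact_mod_cast WithBot.bot_lt_coe r)]
    intro j hj
    simp only [Finset.mem_Icc] at hj
    apply lt_of_le_of_lt (degree_C_mul_X_pow_le _ _)
    exact_mod_cast (by omega : r - j < r)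
  have hmon : (X ^ r + ∑ j ∈ Finset.Icc 1 r, C (a j) * X ^ (r - j) : ℂ[X]).Monic :=
    monic_X_pow_add hdegsum
  refine ⟨hmon, ?_, ?_, ?_⟩
  · have hdeg : (X ^ r + ∑ j ∈ Finset.Icc 1 r, C (a j) * X ^ (r - j) : ℂ[X]).degree = r := by
      rw [degree_add_eq_left_of_degree_lt (by rwa [degree_X_pow]), degree_X_pow]
    exact natDegree_eq_of_degree_eq_some hdeg
  · intro z
    simp [eval_finset_sum]
  · intro z
    rw [derivative_add, derivative_X_pow, map_sum]
    simp only [derivative_C_mul_X_pow]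
    simp [eval_finset_sum, mul_assoc]

/-- Roots of a monic polynomial family near a simple degenerate point.
Let `P(z,ζ) = z^r + h_1(ζ) z^{r−1} + ⋯ + h_r(ζ)` with the `h_j` analytic near `0`,
`h_j(0) = 0` and `h_r'(0) ≠ 0`. Then for every `ε > 0` there is `δ > 0` such that for all
`0 < |ζ| < δ` the polynomial `P(·,ζ)` has exactly `r` pairwise distinct roots, and every
root `z` satisfies `|z^r + ζ·h_r'(0)| ≤ ε |ζ|`. -/
theorem statement13 (r : ℕ) (hr : 1 ≤ r) (h : ℕ → ℂ → ℂ)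
    (han : ∀ j, 1 ≤ j → j ≤ r → AnalyticAt ℂ (h j) 0)
    (h0 : ∀ j, 1 ≤ j → j ≤ r → h j 0 = 0)
    (hd : deriv (h r) 0 ≠ 0) :
    ∀ ε > (0:ℝ), ∃ δ > (0:ℝ), ∀ ζ : ℂ, ζ ≠ 0 → ‖ζ‖ < δ →
      (∃ Z : Fin r → ℂ, Function.Injective Z ∧
        (∀ i, Z i ^ r + ∑ j ∈ Finset.Icc 1 r, h j ζ * Z i ^ (r - j) = 0) ∧
        (∀ z : ℂ, z ^ r + ∑ j ∈ Finset.Icc 1 r, h j ζ * z ^ (r - j) = 0 →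
          ∃ i, z = Z i)) ∧
      (∀ z : ℂ, z ^ r + ∑ j ∈ Finset.Icc 1 r, h j ζ * z ^ (r - j) = 0 →
        ‖z ^ r + ζ * deriv (h r) 0‖ ≤ ε * ‖ζ‖) := by
  classical
  intro ε hε
  set c : ℂ := deriv (h r) 0 with hcdef
  have hcn : 0 < ‖c‖ := norm_pos_iff.mpr hd
  set M : ℝ := 1 + ∑ j ∈ Finset.Icc 1 r, ‖deriv (h j) 0‖ with hMdef
  have hM1 : 1 ≤ M := le_add_of_nonneg_right (Finset.sum_nonneg fun _ _ => norm_nonneg _)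
  have hMpos : (0:ℝ) < M := lt_of_lt_of_le one_pos hM1
  have hrpos : (0:ℝ) < (r:ℝ) := by exact_mod_cast hr
  set κ : ℝ := min 1 (min (‖c‖/2) (ε/2)) with hκdef
  have hκpos : 0 < κ := lt_min one_pos (lt_min (by linarith) (by linarith))
  have hκ1 : κ ≤ 1 := min_le_left _ _
  have hκc : κ ≤ ‖c‖/2 := le_trans (min_le_right _ _) (min_le_left _ _)
  have hκε : κ ≤ ε/2 := le_trans (min_le_right _ _) (min_le_right _ _)
  set t : ℝ := min 1 (min (ε/(2*r*M)) (‖c‖/(4*r*M))) with htdef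
  have hrM : (0:ℝ) < (r:ℝ) * M := mul_pos hrpos hMpos
  have htpos : 0 < t := lt_min one_pos (lt_min (div_pos hε (by nlinarith)) (div_pos hcn (by nlinarith)))
  have ht1 : t ≤ 1 := min_le_left _ _
  have htε : t ≤ ε/(2*r*M) := le_trans (min_le_right _ _) (min_le_left _ _)
  have htc : t ≤ ‖c‖/(4*r*M) := le_trans (min_le_right _ _) (min_le_right _ _)
  -- eventual derivative bound
  have hev : ∀ᶠ ζ in nhds (0:ℂ), ∀ j ∈ Finset.Icc 1 r, ‖h j ζ - ζ * deriv (h j) 0‖ ≤ κ * ‖ζ‖ := by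
    rw [Filter.eventually_all_finset]
    intro j hj
    simp only [Finset.mem_Icc] at hj
    have hda : HasDerivAt (h j) (deriv (h j) 0) 0 :=
      ((han j hj.1 hj.2).differentiableAt).hasDerivAt
    have hlo := hasDerivAt_iff_isLittleO.mp hda
    have hb := hlo.bound hκpos
    filter_upwards [hb] with ζ hζ
    simpa [h0 j hj.1 hj.2, smul_eq_mul] using hζ
  obtain ⟨δ₀, hδ₀pos, hδ₀⟩ := Metric.eventually_nhds_iff.mp hev
  refine ⟨min δ₀ (t^r/(r*M)), lt_min hδ₀pos (div_pos (pow_pos htpos r) hrM), ?_⟩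
  intro ζ hζ0 hζδ
  have hζpos : 0 < ‖ζ‖ := norm_pos_iff.mpr hζ0
  have hζδ₀ : ‖ζ‖ < δ₀ := lt_of_lt_of_le hζδ (min_le_left _ _)
  have hζt : r * M * ‖ζ‖ < t ^ r := by
    have h1 : ‖ζ‖ < t^r/(r*M) := lt_of_lt_of_le hζδ (min_le_right _ _)
    have h2 : r * M * ‖ζ‖ < r * M * (t^r/(r*M)) :=
      mul_lt_mul_of_pos_left h1 hrM
    have h3 : r * M * (t^r/(r*M)) = t^r := by
      rw [mul_comm, div_mul_cancel₀ _ hrM.ne']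
    exact h2.trans_eq h3
  have hb : ∀ j ∈ Finset.Icc 1 r, ‖h j ζ - ζ * deriv (h j) 0‖ ≤ κ * ‖ζ‖ := by
    intro j hj
    exact hδ₀ (by simpa [dist_zero_right] using hζδ₀) j hj
  have hbj : ∀ j ∈ Finset.Icc 1 r, ‖h j ζ‖ ≤ M * ‖ζ‖ := by
    intro j hj
    have h1 := hb j hj
    have h2 : ‖deriv (h j) 0‖ ≤ M - 1 := by
      rw [hMdef]
      simpa using Finset.single_le_sum (f := fun j => ‖deriv (h j) 0‖)
        (fun _ _ => norm_nonneg _) hj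
    calc ‖h j ζ‖ = ‖(h j ζ - ζ * deriv (h j) 0) + ζ * deriv (h j) 0‖ := by ring_nf
    _ ≤ ‖h j ζ - ζ * deriv (h j) 0‖ + ‖ζ‖ * ‖deriv (h j) 0‖ := by
        refine le_trans (norm_add_le _ _) ?_
        rw [norm_mul]
    _ ≤ κ * ‖ζ‖ + ‖ζ‖ * (M - 1) := by
        have := mul_le_mul_of_nonneg_left h2 (norm_nonneg ζ)
        linarith
    _ ≤ 1 * ‖ζ‖ + ‖ζ‖ * (M - 1) := by
        have := mul_le_mul_of_nonneg_right hκ1 (le_of_lt hζpos)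
        linarith
    _ = M * ‖ζ‖ := by ring
  have hSb : ∑ j ∈ Finset.Icc 1 r, ‖h j ζ‖ ≤ t ^ r := by
    calc ∑ j ∈ Finset.Icc 1 r, ‖h j ζ‖ ≤ ∑ j ∈ Finset.Icc 1 r, M * ‖ζ‖ :=
        Finset.sum_le_sum hbj
    _ = r * (M * ‖ζ‖) := by
        rw [Finset.sum_const, Nat.card_Icc]
        simp [nsmul_eq_mul]
    _ = r * M * ‖ζ‖ := by ring
    _ ≤ t ^ r := hζt.le
  have hroot_small : ∀ z : ℂ, z ^ r + ∑ j ∈ Finset.Icc 1 r, h j ζ * z ^ (r - j) = 0 → ‖z‖ ≤ t :=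
    fun z hz => root_norm_le r hr (fun j => h j ζ) t htpos ht1 hSb z hz
  -- bound on h r ζ from below
  have hrmem : r ∈ Finset.Icc 1 r := Finset.mem_Icc.mpr ⟨hr, le_refl r⟩
  have hhr_lb : (‖c‖/2) * ‖ζ‖ ≤ ‖h r ζ‖ := by
    have h1 := hb r hrmem
    have h2 : ‖ζ * c‖ - ‖h r ζ - ζ * c‖ ≤ ‖h r ζ‖ := by
      have := norm_sub_norm_le (ζ * c) (ζ * c - (ζ * c - h r ζ))
      calc ‖ζ * c‖ - ‖h r ζ - ζ * c‖ = ‖ζ * c‖ - ‖ζ * c - h r ζ‖ := by rw [norm_sub_rev]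
      _ ≤ ‖ζ * c - (ζ * c - h r ζ)‖ := norm_sub_norm_le _ _
      _ = ‖h r ζ‖ := by congr 1; ring
    have h3 : ‖ζ * c‖ = ‖ζ‖ * ‖c‖ := norm_mul _ _
    have h4 := mul_le_mul_of_nonneg_right hκc hζpos.le
    linarith
  -- the second (estimate) part
  have hrMt_ε : r * M * t ≤ ε/2 := by
    have h1 : r * M * t ≤ r * M * (ε/(2*r*M)) :=
      mul_le_mul_of_nonneg_left htε hrM.le
    have h2 : r * M * (ε/(2*r*M)) = ε/2 := by
      have e2 : ε/(2*(r:ℝ)*M) = (ε/2)/((r:ℝ)*M) := by rw [div_div, ← mul_assoc]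
      rw [e2, mul_comm, div_mul_cancel₀ _ hrM.ne']
    exact h1.trans_eq h2
  have hrMt_c : r * M * t ≤ ‖c‖/4 := by
    have h1 : r * M * t ≤ r * M * (‖c‖/(4*r*M)) :=
      mul_le_mul_of_nonneg_left htc hrM.le
    have h2 : r * M * (‖c‖/(4*r*M)) = ‖c‖/4 := by
      have e2 : ‖c‖/(4*(r:ℝ)*M) = (‖c‖/4)/((r:ℝ)*M) := by rw [div_div, ← mul_assoc]
      rw [e2, mul_comm, div_mul_cancel₀ _ hrM.ne']
    exact h1.trans_eq h2
  have hcard_erase : (((Finset.Icc 1 r).erase r).card : ℝ) ≤ (r:ℝ) := by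
    have h1 : ((Finset.Icc 1 r).erase r).card ≤ (Finset.Icc 1 r).card :=
      Finset.card_erase_le
    have h2 : (Finset.Icc 1 r).card = r := by rw [Nat.card_Icc]; omega
    exact_mod_cast h1.trans_eq h2
  have hterm_bound : ∀ z : ℂ, ‖z‖ ≤ t → ∀ j ∈ (Finset.Icc 1 r).erase r,
      ‖h j ζ * z ^ (r - j)‖ ≤ M * ‖ζ‖ * t := by
    intro z hzt j hj
    obtain ⟨hjne, hjmem⟩ := Finset.mem_erase.mp hj
    have hjcc := Finset.mem_Icc.mp hjmem
    have h1 : ‖z ^ (r - j)‖ ≤ t := by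
      rw [norm_pow]
      calc ‖z‖ ^ (r - j) ≤ t ^ (r - j) := pow_le_pow_left₀ (norm_nonneg z) hzt _
      _ ≤ t ^ 1 := pow_le_pow_of_le_one htpos.le ht1 (by omega)
      _ = t := pow_one t
    rw [norm_mul]
    exact mul_le_mul (hbj j hjmem) h1 (norm_nonneg _) (mul_nonneg hMpos.le (norm_nonneg ζ))
  have hest : ∀ z : ℂ, z ^ r + ∑ j ∈ Finset.Icc 1 r, h j ζ * z ^ (r - j) = 0 →
      ‖z ^ r + ζ * c‖ ≤ ε * ‖ζ‖ := by
    intro z hz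
    have hzt := hroot_small z hz
    have hsplit : ∑ j ∈ Finset.Icc 1 r, h j ζ * z ^ (r - j)
        = (∑ j ∈ (Finset.Icc 1 r).erase r, h j ζ * z ^ (r - j)) + h r ζ * z ^ (r - r) :=
      (Finset.sum_erase_add _ _ hrmem).symm
    have hzr : z ^ (r - r) = 1 := by rw [Nat.sub_self, pow_zero]
    have hzsum : z ^ r + ζ * c
        = -(∑ j ∈ (Finset.Icc 1 r).erase r, h j ζ * z ^ (r - j)) - (h r ζ - ζ * c) := by
      rw [hsplit, hzr] at hz
      linear_combination hz
    have hsum_bound : ‖∑ j ∈ (Finset.Icc 1 r).erase r, h j ζ * z ^ (r - j)‖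
        ≤ r * (M * ‖ζ‖ * t) := by
      calc ‖∑ j ∈ (Finset.Icc 1 r).erase r, h j ζ * z ^ (r - j)‖
          ≤ ∑ j ∈ (Finset.Icc 1 r).erase r, ‖h j ζ * z ^ (r - j)‖ := norm_sum_le _ _
      _ ≤ ∑ j ∈ (Finset.Icc 1 r).erase r, M * ‖ζ‖ * t :=
          Finset.sum_le_sum (hterm_bound z hzt)
      _ = (((Finset.Icc 1 r).erase r).card : ℝ) * (M * ‖ζ‖ * t) := by
          rw [Finset.sum_const, nsmul_eq_mul]
      _ ≤ r * (M * ‖ζ‖ * t) := by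
          apply mul_le_mul_of_nonneg_right hcard_erase
          exact mul_nonneg (mul_nonneg hMpos.le (norm_nonneg ζ)) htpos.le
    calc ‖z ^ r + ζ * c‖
        = ‖-(∑ j ∈ (Finset.Icc 1 r).erase r, h j ζ * z ^ (r - j)) - (h r ζ - ζ * c)‖ := by
          rw [hzsum]
    _ ≤ ‖∑ j ∈ (Finset.Icc 1 r).erase r, h j ζ * z ^ (r - j)‖ + ‖h r ζ - ζ * c‖ := by
        refine le_trans (norm_sub_le _ _) ?_
        rw [norm_neg]
    _ ≤ r * (M * ‖ζ‖ * t) + κ * ‖ζ‖ := add_le_add hsum_bound (hb r hrmem)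
    _ ≤ (ε/2) * ‖ζ‖ + (ε/2) * ‖ζ‖ := by
        have h1 : r * (M * ‖ζ‖ * t) = (r * M * t) * ‖ζ‖ := by ring
        have h2 : (r * M * t) * ‖ζ‖ ≤ (ε/2) * ‖ζ‖ :=
          mul_le_mul_of_nonneg_right hrMt_ε hζpos.le
        have h3 : κ * ‖ζ‖ ≤ (ε/2) * ‖ζ‖ :=
          mul_le_mul_of_nonneg_right hκε hζpos.le
        linarith
    _ = ε * ‖ζ‖ := by ring
  -- no multiple roots
  have hnomult : ∀ z : ℂ,
      z ^ r + ∑ j ∈ Finset.Icc 1 r, h j ζ * z ^ (r - j) = 0 →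
      (r:ℂ) * z ^ (r-1) + ∑ j ∈ Finset.Icc 1 r, h j ζ * ((r-j:ℕ):ℂ) * z ^ ((r-j)-1) = 0 →
      False := by
    intro z hz hz'
    have hid := deriv_identity r hr (fun j => h j ζ) z hz hz'
    have hzt := hroot_small z hz
    have hsplit : (r:ℂ) * (h r ζ * z ^ (r - r))
        = -∑ j ∈ (Finset.Icc 1 r).erase r, (j:ℂ) * (h j ζ * z ^ (r - j)) := by
      rw [← Finset.sum_erase_add _ _ hrmem] at hid
      linear_combination hid
    have hzr : z ^ (r - r) = 1 := by rw [Nat.sub_self, pow_zero]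
    have hlhs : ‖(r:ℂ) * (h r ζ * z ^ (r - r))‖ = r * ‖h r ζ‖ := by
      rw [hzr, norm_mul, Complex.norm_natCast, mul_one]
    have hterm : ∀ j ∈ (Finset.Icc 1 r).erase r,
        ‖(j:ℂ) * (h j ζ * z ^ (r - j))‖ ≤ r * (M * ‖ζ‖ * t) := by
      intro j hj
      obtain ⟨hjne, hjmem⟩ := Finset.mem_erase.mp hj
      have hjcc := Finset.mem_Icc.mp hjmem
      rw [norm_mul, Complex.norm_natCast]
      have h1 : (j:ℝ) ≤ (r:ℝ) := by exact_mod_cast hjcc.2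
      have h2 := hterm_bound z hzt j hj
      calc (j:ℝ) * ‖h j ζ * z ^ (r - j)‖ ≤ (r:ℝ) * ‖h j ζ * z ^ (r - j)‖ :=
            mul_le_mul_of_nonneg_right h1 (norm_nonneg _)
      _ ≤ (r:ℝ) * (M * ‖ζ‖ * t) := mul_le_mul_of_nonneg_left h2 hrpos.le
    have hub : r * ‖h r ζ‖ ≤ r * (r * (M * ‖ζ‖ * t)) := by
      rw [← hlhs, hsplit, norm_neg]
      calc ‖∑ j ∈ (Finset.Icc 1 r).erase r, (j:ℂ) * (h j ζ * z ^ (r - j))‖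
          ≤ ∑ j ∈ (Finset.Icc 1 r).erase r, ‖(j:ℂ) * (h j ζ * z ^ (r - j))‖ := norm_sum_le _ _
      _ ≤ ∑ j ∈ (Finset.Icc 1 r).erase r, r * (M * ‖ζ‖ * t) := Finset.sum_le_sum hterm
      _ = (((Finset.Icc 1 r).erase r).card : ℝ) * (r * (M * ‖ζ‖ * t)) := by
          rw [Finset.sum_const, nsmul_eq_mul]
      _ ≤ r * (r * (M * ‖ζ‖ * t)) := by
          apply mul_le_mul_of_nonneg_right hcard_erase
          exact mul_nonneg hrpos.le (mul_nonneg (mul_nonneg hMpos.le (norm_nonneg ζ)) htpos.le)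
    have hub2 : ‖h r ζ‖ ≤ r * M * t * ‖ζ‖ := by
      have h5 := (mul_le_mul_iff_right₀ hrpos).mp hub
      have e : (r:ℝ) * (M * ‖ζ‖ * t) = r * M * t * ‖ζ‖ := by ring
      linarith
    have hub3 : ‖h r ζ‖ ≤ (‖c‖/4) * ‖ζ‖ := by
      have h6 := mul_le_mul_of_nonneg_right hrMt_c hζpos.le
      exact hub2.trans h6
    have h7 := mul_pos hcn hζpos
    have h8 := hhr_lb.trans hub3
    have e8 : ‖c‖/2*‖ζ‖ = (‖c‖*‖ζ‖)/2 := by ring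
    have e9 : (‖c‖/4)*‖ζ‖ = (‖c‖*‖ζ‖)/4 := by ring
    rw [e8, e9] at h8
    linarith
  -- polynomial and its roots
  obtain ⟨hmon, hnat, hevalp, hevald⟩ := poly_basic r (fun j => h j ζ)
  set p : Polynomial ℂ :=
    Polynomial.X ^ r + ∑ j ∈ Finset.Icc 1 r, Polynomial.C (h j ζ) * Polynomial.X ^ (r - j)
    with hpdef
  have hpne : p ≠ 0 := hmon.ne_zero
  have hnodup : p.roots.Nodup := by
    rw [Multiset.nodup_iff_count_le_one]
    intro z
    by_contra hcount
    push_neg at hcount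
    rw [Polynomial.count_roots] at hcount
    obtain ⟨hz1, hz2⟩ := (Polynomial.one_lt_rootMultiplicity_iff_isRoot hpne).mp hcount
    have e1 : z ^ r + ∑ j ∈ Finset.Icc 1 r, h j ζ * z ^ (r - j) = 0 := by
      rw [← hevalp z]; exact hz1
    have e2 : (r:ℂ) * z ^ (r-1) + ∑ j ∈ Finset.Icc 1 r, h j ζ * ((r-j:ℕ):ℂ) * z ^ ((r-j)-1) = 0 := by
      rw [← hevald z]; exact hz2
    exact hnomult z e1 e2
  have hcard : p.roots.card = r := by
    rw [← hnat]
    exact Polynomial.splits_iff_card_roots.mp (IsAlgClosed.splits p)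
  have hlen : p.roots.toList.length = r := by rw [Multiset.length_toList, hcard]
  have hlnd : p.roots.toList.Nodup := by
    have h2 := hnodup
    rwa [← Multiset.coe_toList p.roots, Multiset.coe_nodup] at h2
  refine ⟨⟨fun i => p.roots.toList.get (Fin.cast hlen.symm i), ?_, ?_, ?_⟩, hest⟩
  · intro i i' hii
    have h2 := List.nodup_iff_injective_get.mp hlnd hii
    simpa [Fin.ext_iff] using h2
  · intro i
    have hmem : p.roots.toList.get (Fin.cast hlen.symm i) ∈ p.roots.toList :=
      List.get_mem _ _
    have h2 : p.roots.toList.get (Fin.cast hlen.symm i) ∈ p.roots :=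
      Multiset.mem_toList.mp hmem
    have h3 := (Polynomial.mem_roots hpne).mp h2
    rw [← hevalp]
    exact h3
  · intro z hz
    have h2 : z ∈ p.roots := (Polynomial.mem_roots hpne).mpr
      (by rw [Polynomial.IsRoot.def, hevalp]; exact hz)
    have h3 : z ∈ p.roots.toList := Multiset.mem_toList.mpr h2
    obtain ⟨k, hk⟩ := List.mem_iff_get.mp h3
    exact ⟨Fin.cast hlen k, hk.symm⟩
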